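/- Let K → L be a defect Artin-Schreier extension of fields of characteristic p > 0 with valuation ω of L restricting to ν on K. If Θ and Θ' are any two Artin-Schreier generators of L over K (i.e. L = K(Θ) = K(Θ') with Θ^p − Θ ∈ K and Θ'^p − Θ' ∈ K), then dist(Θ,K) = dist(Θ',K); thus the distance of the Artin-Schreier extension is well defined. -/

import Mathlib

noncomputable section

namespace ASDefect

variable {Γ : Type*} [LinearOrderedCommGroupWithZero Γ]

/-- The value group `wL` of a valuation `w` on a field `L`, as a subgroup of `Γˣ`. -/
def valueGroup {L : Type*} [Field L] (w : Valuation L Γ) : Subgroup Γˣ :=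
  (Units.map w.toMonoidWithZeroHom.toMonoidHom).range

/-- The value group `vK` of the restriction of `w` to `K`, as a subgroup of `Γˣ`. -/
def valueGroupRes (K : Type*) {L : Type*} [Field K] [Field L] [Algebra K L]
    (w : Valuation L Γ) : Subgroup Γˣ :=
  ((Units.map w.toMonoidWithZeroHom.toMonoidHom).comp
      (Units.map (algebraMap K L).toMonoidHom)).range

/-- The reduced ramification index `e(w/v) = [wL : vK]`. -/
def ramificationIndex (K : Type*) {L : Type*} [Field K] [Field L] [Algebra K L]
    (w : Valuation L Γ) : ℕ :=
  (valueGroupRes K w).relIndex (valueGroup w)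

variable {K L : Type*} [Field K] [Field L] [Algebra K L]

lemma isUnit_valuationSubring_iff (w : Valuation L Γ) (a : w.valuationSubring) :
    IsUnit a ↔ w a = 1 := by
  constructor
  · rintro ⟨u, rfl⟩
    have h1 : w ((u : w.valuationSubring) : L) * w (((u⁻¹ : _) : w.valuationSubring) : L) = 1 := by
      rw [← Valuation.map_mul]
      norm_cast
      rw [mul_inv_cancel]
      simp
    have hu : w ((u : w.valuationSubring) : L) ≤ 1 := (u : w.valuationSubring).2
    have hv : w (((u⁻¹ : _) : w.valuationSubring) : L) ≤ 1 := ((u⁻¹ : _) : w.valuationSubring).2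
    have h2 : (1 : Γ) ≤ w (((u⁻¹ : _) : w.valuationSubring) : L) := by
      calc (1 : Γ) = w ((u : w.valuationSubring) : L) * w (((u⁻¹ : _) : w.valuationSubring) : L) :=
            h1.symm
        _ ≤ 1 * w (((u⁻¹ : _) : w.valuationSubring) : L) := by
            exact mul_le_mul_left hu _
        _ = w (((u⁻¹ : _) : w.valuationSubring) : L) := one_mul _
    have : w (((u⁻¹ : _) : w.valuationSubring) : L) = 1 := le_antisymm hv h2
    rw [this, mul_one] at h1
    exact h1
  · intro h
    have ha : ((a : L))⁻¹ ∈ w.valuationSubring := by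
      rw [Valuation.mem_valuationSubring_iff, map_inv₀, h, inv_one]
    refine IsUnit.of_mul_eq_one (a := a) ⟨(a : L)⁻¹, ha⟩ ?_
    have hne : (a : L) ≠ 0 := by
      intro hc
      rw [hc, Valuation.map_zero] at h
      exact zero_ne_one h
    ext
    push_cast
    field_simp

/-- The inclusion of the valuation ring of the restriction of `w` to `K` into the
valuation ring of `w`. -/
def integersMap (K : Type*) {L : Type*} [Field K] [Field L] [Algebra K L]
    (w : Valuation L Γ) :
    (w.comap (algebraMap K L)).valuationSubring →+* w.valuationSubring :=
  RingHom.codRestrict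
    ((algebraMap K L).comp (w.comap (algebraMap K L)).valuationSubring.subtype)
    w.valuationSubring.toSubring
    (fun x => by
      have := x.2
      rw [Valuation.mem_valuationSubring_iff] at this
      exact this)

lemma isLocalHom_integersMap (w : Valuation L Γ) : IsLocalHom (integersMap K w) := by
  constructor
  intro a ha
  rw [isUnit_valuationSubring_iff] at ha
  rw [isUnit_valuationSubring_iff]
  exact ha

/-- The residue degree `f(w/v) = [Lw : Kv]`. -/
def residueDegree (K : Type*) {L : Type*} [Field K] [Field L] [Algebra K L]
    (w : Valuation L Γ) : ℕ :=
  letI : IsLocalHom (integersMap K w) := isLocalHom_integersMap w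
  letI : Algebra (IsLocalRing.ResidueField (w.comap (algebraMap K L)).valuationSubring)
      (IsLocalRing.ResidueField w.valuationSubring) :=
    (IsLocalRing.ResidueField.map (integersMap K w)).toAlgebra
  Module.finrank (IsLocalRing.ResidueField (w.comap (algebraMap K L)).valuationSubring)
    (IsLocalRing.ResidueField w.valuationSubring)

/-- The number `g` of extensions of the restriction `v = w|K` to `L`, counted as
valuation subrings of `L` lying over the valuation subring of `v`. -/
def numExtensions (K : Type*) {L : Type*} [Field K] [Field L] [Algebra K L]
    (w : Valuation L Γ) : ℕ :=
  Nat.card {A : ValuationSubring L //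
    A.comap (algebraMap K L) = (w.comap (algebraMap K L)).valuationSubring}

/-- The defect `δ(w/v)`, defined through the formula `[L:K] = e f δ g`. -/
def defect (K : Type*) {L : Type*} [Field K] [Field L] [Algebra K L]
    (w : Valuation L Γ) : ℕ :=
  Module.finrank K L /
    (ramificationIndex K w * residueDegree K w * numExtensions K w)

/-- `L = K(Θ)` is an Artin-Schreier extension of `K` with Artin-Schreier
generator `Θ`: `Θ^p - Θ ∈ K` and `L = K(Θ)` has degree `p`. -/
def IsArtinSchreierExt (K : Type*) {L : Type*} [Field K] [Field L] [Algebra K L]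
    (p : ℕ) (Θ : L) : Prop :=
  Θ ∉ Set.range (algebraMap K L) ∧ (Θ ^ p - Θ) ∈ Set.range (algebraMap K L) ∧
    IntermediateField.adjoin K {Θ} = ⊤ ∧ Module.finrank K L = p

/-- The set `Λ^L(z, K) = { w(z - c) | c ∈ K, w(z - c) ∈ vK }` of values of `z - K`
lying in the value group of the restriction `v` of `w` to `K`. -/
def valuesSet (K : Type*) {L : Type*} [Field K] [Field L] [Algebra K L]
    (w : Valuation L Γ) (z : L) : Set Γ :=
  {γ : Γ | ∃ c : K, z - algebraMap K L c ≠ 0 ∧ w (z - algebraMap K L c) = γ ∧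
    ∃ d : K, d ≠ 0 ∧ w (algebraMap K L d) = γ}

/-- The initial segment of the cut `dist (z, K)` in the divisible hull of `vK`:
the least initial segment in which `w(z - K)` is cofinal, i.e. the downward closure
of `Λ^L(z, K)`.  Two cuts in the divisible hull induced by subsets of the value
group are equal iff the downward closures of these subsets taken inside `Γ` are
equal, so we record the downward closure inside `Γ`. -/
def distInitialSeg (K : Type*) {L : Type*} [Field K] [Field L] [Algebra K L]
    (w : Valuation L Γ) (z : L) : Set Γ :=
  {γ : Γ | ∃ t ∈ valuesSet K w z, γ ≤ t}

universe u v w'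

/-- A witness to the *dependence* of a defect Artin-Schreier extension `L = K(Θ)`
(Kuhlmann): an immediate purely inseparable extension `K(η)` of `(K, v)` of degree
`p` (realized in a valued extension field `(M, wM)` of `(L, w)`) with `η ∼_K Θ`,
that is, `wM (Θ - η) > dist (Θ, K)`. -/
structure DependentDefectWitness (K : Type u) {L : Type v} [Field K] [Field L]
    [Algebra K L] {Γ : Type w'} [LinearOrderedCommGroupWithZero Γ]
    (w : Valuation L Γ) (p : ℕ) (Θ : L) where
  M : Type v
  [fieldM : Field M]
  ι : L →+* M
  Γ' : Type w'
  [ordM : LinearOrderedCommGroupWithZero Γ']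
  j : Γ →*₀ Γ'
  wM : Valuation M Γ'
  η : M
  strictMono_j : StrictMono j
  extends_w : ∀ x : L, wM (ι x) = j (w x)
  pow_mem : η ^ p ∈ Set.range (ι.comp (algebraMap K L))
  not_mem : η ∉ Set.range (ι.comp (algebraMap K L))
  immediate_values : ∀ m ∈ Subfield.closure (Set.range (ι.comp (algebraMap K L)) ∪ {η}),
    m ≠ 0 → ∃ c : K, c ≠ 0 ∧ wM m = j (w (algebraMap K L c))
  immediate_residue : ∀ m ∈ Subfield.closure (Set.range (ι.comp (algebraMap K L)) ∪ {η}),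
    wM m = 1 → ∃ c : K, m - ι (algebraMap K L c) = 0 ∨ wM (m - ι (algebraMap K L c)) < 1
  equiv_theta : ∀ γ ∈ distInitialSeg K w Θ, j γ < wM (ι Θ - η)

/-- A defect Artin-Schreier extension is *dependent* if there is an immediate purely
inseparable extension `K(η)|K` of degree `p` with `η ∼_K Θ`; it is *independent*
otherwise. -/
def IsDependentDefect (K : Type u) {L : Type v} [Field K] [Field L]
    [Algebra K L] {Γ : Type w'} [LinearOrderedCommGroupWithZero Γ]
    (w : Valuation L Γ) (p : ℕ) (Θ : L) : Prop :=
  Nonempty (DependentDefectWitness K w p Θ)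

section Aux

variable {K L : Type*} [Field K] [Field L] [Algebra K L]

lemma valuesSet_subset_aux (ω : Valuation L Γ) (u c : K) (hu : u ≠ 0)
    (hω : ω (algebraMap K L u) = 1) (z : L) :
    valuesSet K ω z ⊆ valuesSet K ω (algebraMap K L u * z + algebraMap K L c) := by
  rintro γ ⟨e, hne, hval, d, hd, hdval⟩
  have key : algebraMap K L u * z + algebraMap K L c - algebraMap K L (u * e + c)
      = algebraMap K L u * (z - algebraMap K L e) := by
    rw [map_add, map_mul]; ring
  refine ⟨u * e + c, ?_, ?_, d, hd, hdval⟩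
  · rw [key]
    exact mul_ne_zero ((map_ne_zero _).mpr hu) hne
  · rw [key, Valuation.map_mul, hω, one_mul, hval]

lemma valuesSet_eq_aux (ω : Valuation L Γ) (u c : K) (hu : u ≠ 0)
    (hω : ω (algebraMap K L u) = 1) (z : L) :
    valuesSet K ω (algebraMap K L u * z + algebraMap K L c) = valuesSet K ω z := by
  refine subset_antisymm ?_ (valuesSet_subset_aux ω u c hu hω z)
  have h1 : ω (algebraMap K L u⁻¹) = 1 := by rw [map_inv₀, map_inv₀, hω, inv_one]
  have h2 := valuesSet_subset_aux ω u⁻¹ (-(u⁻¹ * c)) (inv_ne_zero hu) h1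
      (algebraMap K L u * z + algebraMap K L c)
  have hA : algebraMap K L u ≠ 0 := (map_ne_zero _).mpr hu
  have h3 : algebraMap K L u⁻¹ * (algebraMap K L u * z + algebraMap K L c)
      + algebraMap K L (-(u⁻¹ * c)) = z := by
    rw [map_neg, map_mul, map_inv₀]
    field_simp
    ring
  rwa [h3] at h2

/-- In a field of characteristic `p`, the solutions of `d ^ p = d` are exactly the
elements of the prime field. -/
lemma exists_natCast_of_pow_char_eq {p : ℕ} (hp : p.Prime) {L : Type*} [Field L]
    [CharP L p] {d : L} (hdp : d ^ p = d) : ∃ i : ℕ, i < p ∧ (i : L) = d := by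
  haveI := Fact.mk hp
  classical
  set q₀ : Polynomial L := Polynomial.X ^ p - Polynomial.X with hq₀
  have hdegX : (Polynomial.X : Polynomial L).degree < (p : ℕ) := by
    rw [Polynomial.degree_X]
    exact_mod_cast hp.one_lt
  have hq₀monic : q₀.Monic := by rw [hq₀]; exact Polynomial.monic_X_pow_sub hdegX
  have hq₀deg : q₀.natDegree = p := by
    rw [hq₀, Polynomial.natDegree_sub_eq_left_of_natDegree_lt, Polynomial.natDegree_X_pow]
    rw [Polynomial.natDegree_X_pow, Polynomial.natDegree_X]
    exact hp.one_lt
  set S : Finset L := (Finset.range p).image (Nat.cast : ℕ → L) with hS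
  have hScard : S.card = p := by
    rw [hS, Finset.card_image_of_injOn, Finset.card_range]
    exact (CharP.natCast_injOn_Iio L p).mono (by rw [Finset.coe_range])
  have hroot_cast : ∀ i : ℕ, ((i : L)) ^ p = (i : L) := by
    intro i
    have : ((i : ZMod p)) ^ p = (i : ZMod p) := ZMod.pow_card _
    calc ((i : L)) ^ p = (ZMod.castHom (dvd_refl p) L) ((i : ZMod p) ^ p) := by
          rw [map_pow, map_natCast]
      _ = (ZMod.castHom (dvd_refl p) L) (i : ZMod p) := by rw [this]
      _ = (i : L) := by rw [map_natCast]
  have hSsub : S ⊆ q₀.roots.toFinset := by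
    intro y hy
    rw [hS, Finset.mem_image] at hy
    obtain ⟨i, _, rfl⟩ := hy
    rw [Multiset.mem_toFinset, Polynomial.mem_roots hq₀monic.ne_zero]
    show Polynomial.eval _ q₀ = 0
    rw [hq₀]
    simp [hroot_cast i]
  have hcard2 : q₀.roots.toFinset.card ≤ p :=
    le_trans (Multiset.toFinset_card_le _) (le_trans (Polynomial.card_roots' q₀) hq₀deg.le)
  have heq : S = q₀.roots.toFinset :=
    Finset.eq_of_subset_of_card_le hSsub (by rw [hScard]; exact hcard2)
  have hdmem : d ∈ q₀.roots.toFinset := by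
    rw [Multiset.mem_toFinset, Polynomial.mem_roots hq₀monic.ne_zero]
    show Polynomial.eval _ q₀ = 0
    rw [hq₀]
    simp [hdp]
  rw [← heq, hS, Finset.mem_image] at hdmem
  obtain ⟨i, hi, hid⟩ := hdmem
  exact ⟨i, Finset.mem_range.mp hi, hid⟩

end Aux

end ASDefect

open ASDefect in
/-- For a defect Artin-Schreier extension `L/K`, the distance `dist (Θ, K)` (a cut
in the divisible hull of `νK`, here recorded through the downward closure in `Γ` of
the set `ω(Θ - K) ∩ νK`, which determines the cut) is independent of the choice of
Artin-Schreier generator `Θ` of `L/K`. -/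
theorem artinSchreier_distance_well_defined
    {K L : Type*} [Field K] [Field L] [Algebra K L] (p : ℕ) (hp : p.Prime)
    (hchar : CharP K p)
    {Γ : Type*} [LinearOrderedCommGroupWithZero Γ] (ω : Valuation L Γ)
    (hdefect : defect K ω = p)
    (Θ Θ' : L) (hAS : IsArtinSchreierExt K p Θ) (hAS' : IsArtinSchreierExt K p Θ') :
    distInitialSeg K ω Θ = distInitialSeg K ω Θ' := by
  classical
  obtain ⟨hΘmem, ⟨a, ha⟩, hadj, hfin⟩ := hAS
  obtain ⟨hΘ'mem, ⟨a', ha'⟩, hadj', hfin'⟩ := hAS'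
  haveI := Fact.mk hp
  have hinj := (algebraMap K L).injective
  haveI : CharP L p := charP_of_injective_algebraMap hinj p
  haveI : FiniteDimensional K L := FiniteDimensional.of_finrank_pos (hfin ▸ hp.pos)
  set q : Polynomial K := Polynomial.X ^ p - Polynomial.X - Polynomial.C a with hq
  have hint : IsIntegral K Θ := IsIntegral.of_finite K Θ
  have haq : Polynomial.aeval Θ q = 0 := by
    simp only [hq, map_sub, Polynomial.aeval_X_pow, Polynomial.aeval_X, Polynomial.aeval_C]
    rw [ha]; ring
  have hqsplit : q = Polynomial.X ^ p - (Polynomial.X + Polynomial.C a) := by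
    rw [hq]; ring
  have hdegXC : (Polynomial.X + Polynomial.C a : Polynomial K).degree < (p : ℕ) := by
    rw [Polynomial.degree_X_add_C]
    exact_mod_cast hp.one_lt
  have hqmonic : q.Monic := by
    rw [hqsplit]
    exact Polynomial.monic_X_pow_sub hdegXC
  have hqdeg : q.natDegree = p := by
    rw [hqsplit, Polynomial.natDegree_sub_eq_left_of_natDegree_lt, Polynomial.natDegree_X_pow]
    rw [Polynomial.natDegree_X_pow, Polynomial.natDegree_X_add_C]
    exact hp.one_lt
  have hmindeg : (minpoly K Θ).natDegree = p := by
    have h3 := IntermediateField.adjoin.finrank hint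
    rw [hadj] at h3
    rw [← h3, (IntermediateField.topEquiv (F := K) (E := L)).toLinearEquiv.finrank_eq, hfin]
  have hmin : minpoly K Θ = q := by
    have := Polynomial.eq_of_monic_of_dvd_of_natDegree_le (minpoly.monic hint) hqmonic
      (minpoly.dvd K Θ haq) (by rw [hqdeg, hmindeg])
    exact this.symm
  -- the Artin-Schreier automorphism Θ ↦ Θ + 1
  let e : (IntermediateField.adjoin K {Θ}) ≃ₐ[K] L :=
    (IntermediateField.equivOfEq hadj).trans IntermediateField.topEquiv
  let pb : PowerBasis K L := (IntermediateField.adjoin.powerBasis hint).map e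
  have hgen : pb.gen = Θ := by
    simp [pb, e, IntermediateField.adjoin.powerBasis]
  have hroot : Polynomial.aeval (Θ + 1) (minpoly K pb.gen) = 0 := by
    rw [hgen, hmin]
    simp only [hq, map_sub, Polynomial.aeval_X_pow, Polynomial.aeval_X, Polynomial.aeval_C]
    rw [add_pow_char, one_pow, ha]; ring
  let σ : L →ₐ[K] L := pb.lift (Θ + 1) hroot
  have hσΘ : σ Θ = Θ + 1 := by
    conv_lhs => rw [← hgen]
    exact pb.lift_gen _ _
  set d := σ Θ' - Θ' with hd
  have hσΘ' : σ Θ' = Θ' + d := by rw [hd]; ring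
  have hb : σ (Θ' ^ p - Θ') = Θ' ^ p - Θ' := by rw [← ha']; exact σ.commutes a'
  have hdp : d ^ p = d := by
    have h1 : σ Θ' ^ p - σ Θ' = Θ' ^ p - Θ' := by rw [← map_pow, ← map_sub, hb]
    rw [hd, sub_pow_char]
    linear_combination h1
  -- d is in the prime field
  obtain ⟨i, hip, hid⟩ : ∃ i : ℕ, i < p ∧ (i : L) = d :=
    exists_natCast_of_pow_char_eq hp hdp
  have hmapi : algebraMap K L ((i : K)) = (i : L) := map_natCast _ i
  set x := Θ' - algebraMap K L (i : K) * Θ with hx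
  have hσx : σ x = x := by
    have h6 : σ x = σ Θ' - algebraMap K L (i : K) * σ Θ := by
      rw [hx, map_sub, map_mul, σ.commutes]
    rw [h6, hσΘ', hσΘ, hmapi, hid, hx, hmapi, hid]
    ring
  have hxK : x ∈ Set.range (algebraMap K L) := by
    by_contra hxmem
    have hne_bot : IntermediateField.adjoin K {x} ≠ ⊥ := by
      intro hbot
      refine hxmem ?_
      rw [← IntermediateField.mem_bot (F := K), ← hbot]
      exact IntermediateField.mem_adjoin_simple_self K x
    have hfd : Module.finrank K (IntermediateField.adjoin K {x}) ∣ p :=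
      ⟨Module.finrank (IntermediateField.adjoin K {x}) L, by
        rw [← hfin, ← Module.finrank_mul_finrank K (IntermediateField.adjoin K {x}) L]⟩
    rcases hp.eq_one_or_self_of_dvd _ hfd with h1 | h1
    · exact hne_bot (IntermediateField.finrank_eq_one_iff.mp h1)
    · have htop : IntermediateField.adjoin K {x} = ⊤ := by
        apply IntermediateField.eq_of_le_of_finrank_eq le_top
        rw [h1, IntermediateField.finrank_top', hfin]
      let Ffix : IntermediateField K L :=
        { AlgHom.equalizer σ (AlgHom.id K L) with
          inv_mem' := fun y hy => by
            have hy' : σ y = y := hy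
            show σ y⁻¹ = y⁻¹
            rw [map_inv₀, hy'] }
      have hxF : x ∈ Ffix := hσx
      have hle : IntermediateField.adjoin K {x} ≤ Ffix :=
        IntermediateField.adjoin_le_iff.mpr (Set.singleton_subset_iff.mpr hxF)
      have hΘF : Θ ∈ Ffix := hle (htop ▸ IntermediateField.mem_top)
      have h7 : σ Θ = Θ := hΘF
      rw [hσΘ] at h7
      exact one_ne_zero (by linear_combination h7)
  obtain ⟨c, hc⟩ := hxK
  have hi0 : (i : K) ≠ 0 := by
    intro h0
    refine hΘ'mem ⟨c, ?_⟩
    rw [hc, hx, h0, map_zero, zero_mul, sub_zero]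
  have hωi : ω (algebraMap K L (i : K)) = 1 := by
    have hd0 : d ≠ 0 := by
      rw [← hid, ← hmapi]
      exact (map_ne_zero _).mpr hi0
    have h5 : ω d ^ p = ω d := by rw [← Valuation.map_pow, hdp]
    set u : Γˣ := Units.mk0 (ω d) ((ω.ne_zero_iff).mpr hd0) with hu
    have hup : u ^ p = u := by
      ext
      rw [Units.val_pow_eq_pow_val]
      exact h5
    have hup1 : u ^ (p - 1) = 1 := by
      have h8 : u ^ (p - 1) * u = u ^ p := by
        rw [← pow_succ, Nat.sub_add_cancel hp.one_lt.le]
      have h9 : u ^ (p - 1) * u = 1 * u := by rw [h8, hup, one_mul]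
      exact mul_right_cancel h9
    have hu1 : u = 1 := (pow_eq_one_iff_left (Nat.sub_ne_zero_of_lt hp.one_lt)).mp hup1
    have : ω d = 1 := by
      have := congrArg Units.val hu1
      rwa [Units.val_one] at this
    rw [hmapi, hid, this]
  have hΘ'eq : Θ' = algebraMap K L (i : K) * Θ + algebraMap K L c := by
    rw [hc, hx]; ring
  have hvs : valuesSet K ω Θ' = valuesSet K ω Θ := by
    rw [hΘ'eq]
    exact valuesSet_eq_aux ω _ c hi0 hωi Θ
  unfold distInitialSeg
  rw [hvs]
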